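/- Let ρ = [a₁,…,a_h] and σ = [b₁,…,b_k] be negative continued fraction expansions with all entries ≥ 2. Then ρ ≤ σ if and only if (a₁,…,a_h) ≼ (b₁,…,b_k), where ≼ is the order defined by: (a₁,…,a_h) ≼ (b₁,…,b_k) iff there is an index 1 ≤ j ≤ min(h,k) with a_i = b_i for i < j and either a_j < b_j, or j = k ≤ h and a_k = b_k. -/
import Mathlib


/-- Negative continued fraction `[a₁,…,a_h] = a₁ - 1/(a₂ - 1/(⋯ - 1/a_h))`. -/
def ncf : List ℤ → ℚ
  | [] => 0
  | a :: l => (a : ℚ) - (ncf l)⁻¹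

/-- The order `≼` on finite integer sequences: `(a₁,…,a_h) ≼ (b₁,…,b_k)` iff there is
    an index `1 ≤ j ≤ min(h,k)` (here `j` is zero-based, so `j < min h k`) with
    `aᵢ = bᵢ` for `i < j` and either `a_j < b_j`, or `j` is the last index of `b`
    (`j = k ≤ h` in one-based terms) and `a_j = b_j`. -/
def SeqLE (l₁ l₂ : List ℤ) : Prop :=
  ∃ j : ℕ, j < min l₁.length l₂.length ∧ l₁.take j = l₂.take j ∧
    (l₁.getD j 0 < l₂.getD j 0 ∨
      (j + 1 = l₂.length ∧ l₂.length ≤ l₁.length ∧ l₁.getD j 0 = l₂.getD j 0))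

lemma one_lt_ncf : ∀ l : List ℤ, l ≠ [] → (∀ a ∈ l, 2 ≤ a) → 1 < ncf l
  | a :: t, _, h => by
    have ha : (2 : ℚ) ≤ (a : ℚ) := by exact_mod_cast h a (List.mem_cons_self ..)
    rcases eq_or_ne t [] with rfl | ht
    · simp only [ncf]
      norm_num
      linarith
    · have h1 := one_lt_ncf t ht (fun x hx => h x (List.mem_cons_of_mem _ hx))
      have h0 : (0 : ℚ) < (ncf t)⁻¹ := inv_pos.mpr (by linarith)
      have h2 : (ncf t)⁻¹ < 1 := by
        rw [inv_lt_one_iff₀]; right; exact h1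
      simp only [ncf]
      linarith

lemma inv_ncf_bounds (l : List ℤ) (h : ∀ a ∈ l, 2 ≤ a) :
    0 ≤ (ncf l)⁻¹ ∧ (ncf l)⁻¹ < 1 := by
  rcases eq_or_ne l [] with rfl | hl
  · simp [ncf]
  · have h1 := one_lt_ncf l hl h
    constructor
    · positivity
    · rw [inv_lt_one_iff₀]; right; exact h1

lemma seqle_cons_cons (a b : ℤ) (t₁ t₂ : List ℤ) :
    SeqLE (a :: t₁) (b :: t₂) ↔ a < b ∨ (a = b ∧ (t₂ = [] ∨ SeqLE t₁ t₂)) := by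
  constructor
  · rintro ⟨j, hj, htake, hcond⟩
    match j with
    | 0 =>
      simp only [List.getD_cons_zero] at hcond
      rcases hcond with h | ⟨hlen, _, hab⟩
      · exact Or.inl h
      · refine Or.inr ⟨hab, Or.inl ?_⟩
        simpa using hlen.symm
    | j + 1 =>
      simp only [List.take_succ_cons, List.cons.injEq] at htake
      simp only [List.getD_cons_succ] at hcond
      simp only [List.length_cons, Nat.succ_min_succ, Nat.succ_lt_succ_iff] at hj
      refine Or.inr ⟨htake.1, Or.inr ⟨j, hj, htake.2, ?_⟩⟩
      rcases hcond with h | ⟨h1, h2, h3⟩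
      · exact Or.inl h
      · refine Or.inr ⟨by simpa using h1, by simpa using h2, h3⟩
  · rintro (hab | ⟨rfl, rfl | ⟨j, hj, htake, hcond⟩⟩)
    · exact ⟨0, by simp [Nat.lt_min], by simp, Or.inl (by simpa using hab)⟩
    · exact ⟨0, by simp, by simp, Or.inr ⟨by simp, by simp, by simp⟩⟩
    · refine ⟨j + 1, ?_, ?_, ?_⟩
      · simpa [Nat.succ_min_succ, Nat.succ_lt_succ_iff] using hj
      · simpa using htake
      · rcases hcond with h | ⟨h1, h2, h3⟩
        · exact Or.inl (by simpa using h)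
        · exact Or.inr ⟨by simpa using h1, by simpa using h2, by simpa using h3⟩

theorem stmt_2 (l₁ l₂ : List ℤ) (h₁ : l₁ ≠ []) (h₂ : l₂ ≠ [])
    (ha : ∀ a ∈ l₁, 2 ≤ a) (hb : ∀ b ∈ l₂, 2 ≤ b) :
    ncf l₁ ≤ ncf l₂ ↔ SeqLE l₁ l₂ := by
  induction l₁ generalizing l₂ with
  | nil => exact absurd rfl h₁
  | cons a t₁ IH =>
    match l₂ with
    | b :: t₂ =>
      have ht₁ : ∀ x ∈ t₁, 2 ≤ x := fun x hx => ha x (List.mem_cons_of_mem _ hx)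
      have ht₂ : ∀ x ∈ t₂, 2 ≤ x := fun x hx => hb x (List.mem_cons_of_mem _ hx)
      obtain ⟨hx0, hx1⟩ := inv_ncf_bounds t₁ ht₁
      obtain ⟨hy0, hy1⟩ := inv_ncf_bounds t₂ ht₂
      rw [seqle_cons_cons]
      show (a : ℚ) - (ncf t₁)⁻¹ ≤ (b : ℚ) - (ncf t₂)⁻¹ ↔ _
      rcases lt_trichotomy a b with hab | rfl | hab
      · have : (a : ℚ) + 1 ≤ b := by exact_mod_cast hab
        simp only [iff_true_intro (Or.inl hab), iff_true]
        linarith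
      · simp only [lt_self_iff_false, false_or, true_and]
        rcases eq_or_ne t₂ [] with rfl | ht2
        · have hy : (ncf ([] : List ℤ))⁻¹ = 0 := by simp [ncf]
          simp only [hy, eq_self_iff_true, true_or, iff_true]
          linarith
        · have h1t₂ := one_lt_ncf t₂ ht2 ht₂
          have hy0' : (0 : ℚ) < (ncf t₂)⁻¹ := inv_pos.mpr (by linarith)
          rcases eq_or_ne t₁ [] with rfl | ht1
          · have : ¬ SeqLE [] t₂ := by rintro ⟨j, hj, -⟩; simp at hj
            simp only [iff_false_intro ht2, iff_false_intro this, false_or, ncf, inv_zero]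
            constructor
            · intro h; linarith
            · intro h; exact absurd h (by simp)
          · have h1t₁ := one_lt_ncf t₁ ht1 ht₁
            have key : (a : ℚ) - (ncf t₁)⁻¹ ≤ (a : ℚ) - (ncf t₂)⁻¹ ↔ ncf t₁ ≤ ncf t₂ := by
              rw [sub_le_sub_iff_left, inv_le_inv₀ (by linarith) (by linarith)]
            rw [key, IH t₂ ht1 ht2 ht₁ ht₂]
            simp [iff_false_intro ht2]
      · have : (b : ℚ) + 1 ≤ a := by exact_mod_cast hab
        have hne : ¬ (a < b) := by omega
        have hne2 : a ≠ b := by omega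
        simp only [iff_false_intro hne, iff_false_intro hne2, false_and, or_self, iff_false,
          not_le]
        linarith
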